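/- arXiv:1810.02998 — 3 statements merged into one kernel-verified Lean document; each statement's English description precedes it below -/
import Mathlib

section
/- For probability measures P and Q and any n ≥ 1, the total variation distance between the n-fold product measures satisfies ‖P^{⊗n} − Q^{⊗n}‖_TV ≤ √(2n ‖P − Q‖_TV). -/
open MeasureTheory ProbabilityTheory

/-- Total variation distance between two measures. -/
noncomputable def tvDist {α : Type*} [MeasurableSpace α] (P Q : Measure α) : ℝ :=
  ⨆ s : {s : Set α // MeasurableSet s}, |(P s).toReal - (Q s).toReal|

section aux

variable {α : Type*} [MeasurableSpace α]

lemma tv_bdd (P Q : Measure α) [IsFiniteMeasure P] [IsFiniteMeasure Q] :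
    BddAbove (Set.range fun s : {s : Set α // MeasurableSet s} =>
      |(P s.1).toReal - (Q s.1).toReal|) := by
  refine ⟨(P Set.univ).toReal + (Q Set.univ).toReal, ?_⟩
  rintro x ⟨s, rfl⟩
  have h1 : (P s.1).toReal ≤ (P Set.univ).toReal :=
    ENNReal.toReal_mono (measure_ne_top _ _) (measure_mono (Set.subset_univ _))
  have h2 : (Q s.1).toReal ≤ (Q Set.univ).toReal :=
    ENNReal.toReal_mono (measure_ne_top _ _) (measure_mono (Set.subset_univ _))
  have h3 : 0 ≤ (P s.1).toReal := ENNReal.toReal_nonneg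
  have h4 : 0 ≤ (Q s.1).toReal := ENNReal.toReal_nonneg
  rw [abs_sub_le_iff]
  constructor <;> linarith

lemma tv_le (P Q : Measure α) [IsFiniteMeasure P] [IsFiniteMeasure Q] {s : Set α}
    (hs : MeasurableSet s) : |(P s).toReal - (Q s).toReal| ≤ tvDist P Q :=
  le_ciSup (tv_bdd P Q) (⟨s, hs⟩ : {s : Set α // MeasurableSet s})

lemma tv_nonneg (P Q : Measure α) [IsFiniteMeasure P] [IsFiniteMeasure Q] :
    0 ≤ tvDist P Q :=
  (abs_nonneg _).trans (tv_le P Q MeasurableSet.empty)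

lemma measure_le_add_tv (P Q : Measure α) [IsFiniteMeasure P] [IsFiniteMeasure Q] {s : Set α}
    (hs : MeasurableSet s) : P s ≤ Q s + ENNReal.ofReal (tvDist P Q) := by
  have h := tv_le P Q hs
  rw [abs_sub_le_iff] at h
  calc P s = ENNReal.ofReal ((P s).toReal) := (ENNReal.ofReal_toReal (measure_ne_top _ _)).symm
    _ ≤ ENNReal.ofReal ((Q s).toReal + tvDist P Q) := ENNReal.ofReal_le_ofReal (by linarith [h.1])
    _ = ENNReal.ofReal ((Q s).toReal) + ENNReal.ofReal (tvDist P Q) :=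
        ENNReal.ofReal_add ENNReal.toReal_nonneg (tv_nonneg P Q)
    _ = Q s + ENNReal.ofReal (tvDist P Q) := by
        rw [ENNReal.ofReal_toReal (measure_ne_top _ _)]

lemma tv_le_one (P Q : Measure α) [IsProbabilityMeasure P] [IsProbabilityMeasure Q] :
    tvDist P Q ≤ 1 := by
  refine ciSup_le fun s => ?_
  rw [abs_sub_le_iff]
  have h1 : (P s.1).toReal ≤ 1 := by
    simpa using ENNReal.toReal_mono (by simp) (prob_le_one (μ := P) (s := s.1))
  have h2 : (Q s.1).toReal ≤ 1 := by
    simpa using ENNReal.toReal_mono (by simp) (prob_le_one (μ := Q) (s := s.1))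
  have h3 : 0 ≤ (P s.1).toReal := ENNReal.toReal_nonneg
  have h4 : 0 ≤ (Q s.1).toReal := ENNReal.toReal_nonneg
  constructor <;> linarith

/-- Layer cake bound: integrals of a `[0,1]`-valued function against two probability
measures differ by at most the total variation distance. -/
lemma lintegral_le_lintegral_add_tv (P Q : Measure α) [IsProbabilityMeasure P]
    [IsProbabilityMeasure Q] (f : α → ENNReal) (hf : Measurable f) (hf1 : ∀ x, f x ≤ 1) :
    (∫⁻ x, f x ∂P).toReal ≤ (∫⁻ x, f x ∂Q).toReal + tvDist P Q := by
  set F : α → ℝ := fun x => (f x).toReal with hF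
  have hFm : Measurable F := hf.ennreal_toReal
  have hF1 : ∀ x, F x ≤ 1 := fun x => by
    simpa using ENNReal.toReal_mono (by simp) (hf1 x)
  have hFof : ∀ x, ENNReal.ofReal (F x) = f x := fun x =>
    ENNReal.ofReal_toReal (lt_of_le_of_lt (hf1 x) (by simp)).ne
  have key : ∀ (μ : Measure α), ∫⁻ x, f x ∂μ = ∫⁻ t in Set.Ioc (0:ℝ) 1, μ {a | t < F a} := by
    intro μ
    have h1 : ∫⁻ x, f x ∂μ = ∫⁻ t in Set.Ioi (0:ℝ), μ {a | t < F a} := by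
      rw [← lintegral_eq_lintegral_meas_lt μ (Filter.Eventually.of_forall fun x =>
        ENNReal.toReal_nonneg) hFm.aemeasurable]
      exact lintegral_congr fun x => (hFof x).symm
    rw [h1, ← Set.Ioc_union_Ioi_eq_Ioi (zero_le_one (α := ℝ)),
      lintegral_union measurableSet_Ioi Set.Ioc_disjoint_Ioi_same]
    have h2 : ∫⁻ t in Set.Ioi (1:ℝ), μ {a | t < F a} = 0 := by
      rw [setLIntegral_congr_fun measurableSet_Ioi
        (fun t (ht : t ∈ Set.Ioi (1:ℝ)) => ?_), lintegral_zero]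
      have : {a | t < F a} = ∅ := by
        ext a; simp only [Set.mem_setOf_eq, Set.mem_empty_iff_false, iff_false, not_lt]
        exact (hF1 a).trans ht.le
      simp [this]
    rw [h2, add_zero]
  have hmeas : ∀ t : ℝ, MeasurableSet {a | t < F a} := fun t =>
    measurableSet_lt measurable_const hFm
  have hbound : ∫⁻ t in Set.Ioc (0:ℝ) 1, P {a | t < F a}
      ≤ (∫⁻ t in Set.Ioc (0:ℝ) 1, Q {a | t < F a}) + ENNReal.ofReal (tvDist P Q) := by
    calc ∫⁻ t in Set.Ioc (0:ℝ) 1, P {a | t < F a}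
        ≤ ∫⁻ t in Set.Ioc (0:ℝ) 1, (Q {a | t < F a} + ENNReal.ofReal (tvDist P Q)) :=
          lintegral_mono fun t => measure_le_add_tv P Q (hmeas t)
      _ = (∫⁻ t in Set.Ioc (0:ℝ) 1, Q {a | t < F a})
          + ENNReal.ofReal (tvDist P Q) * volume (Set.Ioc (0:ℝ) 1) := by
          rw [lintegral_add_right _ measurable_const, setLIntegral_const]
      _ = _ := by simp
  have hQfin : ∫⁻ x, f x ∂Q ≠ ⊤ := by
    refine (lt_of_le_of_lt (lintegral_mono hf1) ?_).ne
    simp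
  rw [key P, key Q] at *
  have := ENNReal.toReal_mono (by
    refine ENNReal.add_ne_top.2 ⟨hQfin, ENNReal.ofReal_ne_top⟩) hbound
  rwa [ENNReal.toReal_add hQfin ENNReal.ofReal_ne_top,
    ENNReal.toReal_ofReal (tv_nonneg P Q)] at this

lemma tv_prod {β : Type*} [MeasurableSpace β] (μ μ' : Measure α) (ν ν' : Measure β)
    [IsProbabilityMeasure μ] [IsProbabilityMeasure μ'] [IsProbabilityMeasure ν]
    [IsProbabilityMeasure ν'] :
    tvDist (μ.prod ν) (μ'.prod ν') ≤ tvDist μ μ' + tvDist ν ν' := by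
  refine ciSup_le fun s => ?_
  obtain ⟨s, hs⟩ := s
  set f : α → ENNReal := fun x => ν (Prod.mk x ⁻¹' s) with hf
  set g : α → ENNReal := fun x => ν' (Prod.mk x ⁻¹' s) with hg
  have hfm : Measurable f := measurable_measure_prodMk_left hs
  have hgm : Measurable g := measurable_measure_prodMk_left hs
  have hf1 : ∀ x, f x ≤ 1 := fun x => prob_le_one
  have hg1 : ∀ x, g x ≤ 1 := fun x => prob_le_one
  have h1 : (μ.prod ν) s = ∫⁻ x, f x ∂μ := Measure.prod_apply hs
  have h2 : (μ'.prod ν') s = ∫⁻ x, g x ∂μ' := Measure.prod_apply hs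
  -- first leg : change measure μ → μ'
  have leg1 : |(∫⁻ x, f x ∂μ).toReal - (∫⁻ x, f x ∂μ').toReal| ≤ tvDist μ μ' := by
    rw [abs_sub_le_iff]
    constructor
    · linarith [lintegral_le_lintegral_add_tv μ μ' f hfm hf1]
    · have := lintegral_le_lintegral_add_tv μ' μ f hfm hf1
      have hsymm : tvDist μ' μ = tvDist μ μ' := by
        unfold tvDist; congr 1; ext s; rw [abs_sub_comm]
      linarith [hsymm ▸ this]
  -- second leg : change integrand f → g under μ'
  have leg2 : |(∫⁻ x, f x ∂μ').toReal - (∫⁻ x, g x ∂μ').toReal| ≤ tvDist ν ν' := by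
    have hfin : ∀ (h : α → ENNReal), (∀ x, h x ≤ 1) → ∫⁻ x, h x ∂μ' ≠ ⊤ := fun h hh =>
      (lt_of_le_of_lt (lintegral_mono hh) (by simp)).ne
    have key : ∀ (u v : α → ENNReal) (c : ℝ), 0 ≤ c → Measurable v → (∀ x, v x ≤ 1) →
        (∀ x, u x ≤ v x + ENNReal.ofReal c) → (∀ x, u x ≤ 1) →
        (∫⁻ x, u x ∂μ').toReal ≤ (∫⁻ x, v x ∂μ').toReal + c := by
      intro u v c hc hvm hv1 huv hu1
      have : ∫⁻ x, u x ∂μ' ≤ (∫⁻ x, v x ∂μ') + ENNReal.ofReal c := by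
        calc ∫⁻ x, u x ∂μ' ≤ ∫⁻ x, (v x + ENNReal.ofReal c) ∂μ' := lintegral_mono huv
          _ = (∫⁻ x, v x ∂μ') + ENNReal.ofReal c * μ' Set.univ := by
              rw [lintegral_add_right _ measurable_const, lintegral_const]
          _ = _ := by simp
      have h := ENNReal.toReal_mono
        (ENNReal.add_ne_top.2 ⟨hfin v hv1, ENNReal.ofReal_ne_top⟩) this
      rwa [ENNReal.toReal_add (hfin v hv1) ENNReal.ofReal_ne_top,
        ENNReal.toReal_ofReal hc] at h
    rw [abs_sub_le_iff]
    have hsymm : tvDist ν' ν = tvDist ν ν' := by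
      unfold tvDist; congr 1; ext s; rw [abs_sub_comm]
    constructor
    · have := key f g (tvDist ν ν') (tv_nonneg ν ν') hgm hg1
        (fun x => measure_le_add_tv ν ν' (measurable_prodMk_left hs)) hf1
      linarith
    · have := key g f (tvDist ν' ν) (hsymm ▸ tv_nonneg ν ν') hfm hf1
        (fun x => measure_le_add_tv ν' ν (measurable_prodMk_left hs)) hg1
      rw [hsymm] at this
      linarith
  calc |((μ.prod ν) s).toReal - ((μ'.prod ν') s).toReal|
      ≤ |(∫⁻ x, f x ∂μ).toReal - (∫⁻ x, f x ∂μ').toReal|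
        + |(∫⁻ x, f x ∂μ').toReal - (∫⁻ x, g x ∂μ').toReal| := by
        rw [h1, h2]; exact abs_sub_le _ _ _
    _ ≤ tvDist μ μ' + tvDist ν ν' := add_le_add leg1 leg2

lemma tv_map {β : Type*} [MeasurableSpace β] (e : α ≃ᵐ β) (μ ν : Measure α)
    [IsFiniteMeasure μ] [IsFiniteMeasure ν] :
    tvDist (μ.map e) (ν.map e) ≤ tvDist μ ν := by
  refine ciSup_le fun s => ?_
  obtain ⟨s, hs⟩ := s
  rw [e.map_apply, e.map_apply]
  exact tv_le μ ν (e.measurable hs)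

lemma tv_pi (P Q : Measure α) [IsProbabilityMeasure P] [IsProbabilityMeasure Q] :
    ∀ n : ℕ, tvDist (Measure.pi (fun _ : Fin n => P)) (Measure.pi (fun _ : Fin n => Q))
      ≤ n * tvDist P Q := by
  intro n
  induction n with
  | zero =>
    have : Measure.pi (fun _ : Fin 0 => P) = Measure.pi (fun _ : Fin 0 => Q) := by
      rw [Measure.pi_of_empty, Measure.pi_of_empty]
    rw [this]
    have h0 : tvDist (Measure.pi fun _ : Fin 0 => Q) (Measure.pi fun _ : Fin 0 => Q) ≤ 0 :=
      ciSup_le fun s => by simp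
    simpa using h0
  | succ n ih =>
    set e := MeasurableEquiv.piFinSuccAbove (fun _ : Fin (n + 1) => α) 0 with he
    have hP := (measurePreserving_piFinSuccAbove (fun _ : Fin (n + 1) => P) 0).symm
    have hQ := (measurePreserving_piFinSuccAbove (fun _ : Fin (n + 1) => Q) 0).symm
    have hPeq : Measure.pi (fun _ : Fin (n + 1) => P)
        = (P.prod (Measure.pi fun _ : Fin n => P)).map e.symm := hP.map_eq.symm
    have hQeq : Measure.pi (fun _ : Fin (n + 1) => Q)
        = (Q.prod (Measure.pi fun _ : Fin n => Q)).map e.symm := hQ.map_eq.symm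
    rw [hPeq, hQeq]
    calc tvDist ((P.prod (Measure.pi fun _ : Fin n => P)).map e.symm)
          ((Q.prod (Measure.pi fun _ : Fin n => Q)).map e.symm)
        ≤ tvDist (P.prod (Measure.pi fun _ : Fin n => P))
          (Q.prod (Measure.pi fun _ : Fin n => Q)) := tv_map e.symm _ _
      _ ≤ tvDist P Q + tvDist (Measure.pi fun _ : Fin n => P)
          (Measure.pi fun _ : Fin n => Q) := tv_prod _ _ _ _
      _ ≤ tvDist P Q + n * tvDist P Q := by linarith
      _ = (n + 1 : ℕ) * tvDist P Q := by push_cast; ring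

end aux

theorem stmt2 {α : Type*} [MeasurableSpace α] (P Q : Measure α)
    [IsProbabilityMeasure P] [IsProbabilityMeasure Q] (n : ℕ) (hn : 1 ≤ n) :
    tvDist (Measure.pi (fun _ : Fin n => P)) (Measure.pi (fun _ : Fin n => Q))
      ≤ Real.sqrt (2 * n * tvDist P Q) := by
  set t := tvDist P Q with ht
  have ht0 : 0 ≤ t := tv_nonneg P Q
  have hT1 : tvDist (Measure.pi (fun _ : Fin n => P)) (Measure.pi (fun _ : Fin n => Q)) ≤ 1 :=
    tv_le_one _ _
  have hTnt : tvDist (Measure.pi (fun _ : Fin n => P)) (Measure.pi (fun _ : Fin n => Q))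
      ≤ n * t := tv_pi P Q n
  rcases le_or_gt ((n : ℝ) * t) 2 with h | h
  · refine hTnt.trans (Real.le_sqrt_of_sq_le ?_)
    have hn0 : (0:ℝ) ≤ (n : ℝ) * t := mul_nonneg (Nat.cast_nonneg n) ht0
    nlinarith
  · refine hT1.trans ?_
    have : (1 : ℝ) ≤ 2 * n * t := by nlinarith
    calc (1:ℝ) = Real.sqrt 1 := (Real.sqrt_one).symm
      _ ≤ Real.sqrt (2 * n * t) := Real.sqrt_le_sqrt this
end

section
/- For 0 < Σ₁ ≤ Σ₂ and any n ≥ 1, the total variation distance between N(0,Σ₁²)^{⊗n} and N(0,Σ₂²)^{⊗n} is at most 1 − (Σ₁/Σ₂)^n. -/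
open MeasureTheory ProbabilityTheory
open scoped NNReal

open Real in
lemma pdf_le_aux (σ₁ σ₂ : ℝ≥0) (h1 : 0 < σ₁) (h12 : σ₁ ≤ σ₂) (x : ℝ) :
    ((σ₁ : ℝ) / σ₂) * gaussianPDFReal 0 (σ₁ ^ 2) x ≤ gaussianPDFReal 0 (σ₂ ^ 2) x := by
  have h1' : (0:ℝ) < σ₁ := h1
  have h2' : (0:ℝ) < σ₂ := lt_of_lt_of_le h1' h12
  have h12' : (σ₁:ℝ) ≤ σ₂ := h12
  have hsqrt : ∀ σ : ℝ≥0, 0 < (σ:ℝ) →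
      Real.sqrt (2 * π * ((σ ^ 2 : ℝ≥0) : ℝ)) = Real.sqrt (2 * π) * σ := by
    intro σ hσ
    push_cast
    rw [Real.sqrt_mul (by positivity), Real.sqrt_sq hσ.le]
  simp only [gaussianPDFReal, sub_zero]
  rw [hsqrt σ₁ h1', hsqrt σ₂ h2']
  have hne : Real.sqrt (2 * π) ≠ 0 := by positivity
  have hcoef : ((σ₁:ℝ)/σ₂) * (Real.sqrt (2 * π) * σ₁)⁻¹ = (Real.sqrt (2 * π) * σ₂)⁻¹ := by
    field_simp
  have hexp : rexp (-x ^ 2 / (2 * ((σ₁ ^ 2 : ℝ≥0) : ℝ))) ≤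
      rexp (-x ^ 2 / (2 * ((σ₂ ^ 2 : ℝ≥0) : ℝ))) := by
    apply Real.exp_le_exp.mpr
    push_cast
    rw [neg_div, neg_div, neg_le_neg_iff]
    gcongr
  calc ((σ₁:ℝ)/σ₂) * ((Real.sqrt (2 * π) * σ₁)⁻¹ * rexp (-x ^ 2 / (2 * ((σ₁ ^ 2 : ℝ≥0) : ℝ))))
      = (Real.sqrt (2 * π) * σ₂)⁻¹ * rexp (-x ^ 2 / (2 * ((σ₁ ^ 2 : ℝ≥0) : ℝ))) := by
        rw [← mul_assoc, hcoef]
    _ ≤ (Real.sqrt (2 * π) * σ₂)⁻¹ * rexp (-x ^ 2 / (2 * ((σ₂ ^ 2 : ℝ≥0) : ℝ))) := by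
        apply mul_le_mul_of_nonneg_left hexp (by positivity)

lemma smul_gauss_le_aux (σ₁ σ₂ : ℝ≥0) (h1 : 0 < σ₁) (h12 : σ₁ ≤ σ₂)
    (s : Set ℝ) (hs : MeasurableSet s) :
    ENNReal.ofReal ((σ₁:ℝ)/σ₂) * gaussianReal 0 (σ₁ ^ 2) s ≤ gaussianReal 0 (σ₂ ^ 2) s := by
  have hv1 : (σ₁ ^ 2 : ℝ≥0) ≠ 0 := pow_ne_zero 2 h1.ne'
  have hv2 : (σ₂ ^ 2 : ℝ≥0) ≠ 0 := pow_ne_zero 2 (lt_of_lt_of_le h1 h12).ne'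
  rw [gaussianReal_apply _ hv1, gaussianReal_apply _ hv2,
    ← lintegral_const_mul _ (measurable_gaussianPDF _ _)]
  refine lintegral_mono fun x => ?_
  rw [gaussianPDF, gaussianPDF, ← ENNReal.ofReal_mul (by positivity)]
  exact ENNReal.ofReal_le_ofReal (pdf_le_aux σ₁ σ₂ h1 h12 x)

open scoped ENNReal in
lemma pi_smul_le_aux (c : ℝ≥0∞) (P Q : Measure ℝ) [IsFiniteMeasure P] [IsFiniteMeasure Q]
    (h : ∀ s : Set ℝ, MeasurableSet s → c * P s ≤ Q s) :
    ∀ n : ℕ, ∀ s : Set (Fin n → ℝ), MeasurableSet s →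
      c ^ n * (Measure.pi fun _ : Fin n => P) s ≤ (Measure.pi fun _ : Fin n => Q) s := by
  intro n
  induction n with
  | zero =>
    intro s hs
    rw [Measure.pi_of_empty, Measure.pi_of_empty, pow_zero, one_mul]
  | succ n ih =>
    intro s hs
    have hPle : (c • P) ≤ Q := Measure.le_iff.mpr (fun t ht => h t ht)
    set e := MeasurableEquiv.piFinSuccAbove (fun _ : Fin (n+1) => ℝ) 0 with he
    have hP := (measurePreserving_piFinSuccAbove (fun _ : Fin (n+1) => P) 0).symm
    have hQ := (measurePreserving_piFinSuccAbove (fun _ : Fin (n+1) => Q) 0).symm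
    have hPs : (Measure.pi fun _ : Fin (n+1) => P) s
        = (P.prod (Measure.pi fun _ : Fin n => P)) (e.symm ⁻¹' s) :=
      (hP.measure_preimage hs.nullMeasurableSet).symm
    have hQs : (Measure.pi fun _ : Fin (n+1) => Q) s
        = (Q.prod (Measure.pi fun _ : Fin n => Q)) (e.symm ⁻¹' s) :=
      (hQ.measure_preimage hs.nullMeasurableSet).symm
    have hts : MeasurableSet (e.symm ⁻¹' s) := e.symm.measurable hs
    rw [hPs, hQs, Measure.prod_apply hts, Measure.prod_apply hts]
    have hslice : ∀ x : ℝ, MeasurableSet (Prod.mk x ⁻¹' (e.symm ⁻¹' s)) :=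
      fun x => measurable_prodMk_left hts
    calc c ^ (n+1) * ∫⁻ x, (Measure.pi fun _ : Fin n => P) (Prod.mk x ⁻¹' (e.symm ⁻¹' s)) ∂P
        = c ^ n * ∫⁻ x, (Measure.pi fun _ : Fin n => P) (Prod.mk x ⁻¹' (e.symm ⁻¹' s)) ∂(c • P) := by
          rw [lintegral_smul_measure, pow_succ]; ring
      _ ≤ c ^ n * ∫⁻ x, (Measure.pi fun _ : Fin n => P) (Prod.mk x ⁻¹' (e.symm ⁻¹' s)) ∂Q :=
          mul_le_mul_right (lintegral_mono' hPle le_rfl) _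
      _ = ∫⁻ x, c ^ n * (Measure.pi fun _ : Fin n => P) (Prod.mk x ⁻¹' (e.symm ⁻¹' s)) ∂Q := by
          rw [lintegral_const_mul _ (measurable_measure_prodMk_left hts)]
      _ ≤ ∫⁻ x, (Measure.pi fun _ : Fin n => Q) (Prod.mk x ⁻¹' (e.symm ⁻¹' s)) ∂Q :=
          lintegral_mono fun x => ih _ (hslice x)

theorem stmt6 (σ₁ σ₂ : ℝ≥0) (h1 : 0 < σ₁) (h12 : σ₁ ≤ σ₂) (n : ℕ) (hn : 1 ≤ n) :
    tvDist (Measure.pi (fun _ : Fin n => gaussianReal 0 (σ₁ ^ 2)))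
        (Measure.pi (fun _ : Fin n => gaussianReal 0 (σ₂ ^ 2)))
      ≤ 1 - ((σ₁ : ℝ) / (σ₂ : ℝ)) ^ n := by
  have h1' : (0:ℝ) < σ₁ := h1
  have h2' : (0:ℝ) < σ₂ := lt_of_lt_of_le h1' h12
  set P := Measure.pi (fun _ : Fin n => gaussianReal 0 (σ₁ ^ 2)) with hPdef
  set Q := Measure.pi (fun _ : Fin n => gaussianReal 0 (σ₂ ^ 2)) with hQdef
  set r : ℝ := ((σ₁ : ℝ) / (σ₂ : ℝ)) ^ n with hrdef
  have hr0 : 0 ≤ r := by positivity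
  have hr1 : r ≤ 1 := pow_le_one₀ (by positivity) (by
    rw [div_le_one h2']; exact_mod_cast h12)
  have key : ∀ s : Set (Fin n → ℝ), MeasurableSet s →
      ENNReal.ofReal r * P s ≤ Q s := by
    intro s hs
    have := pi_smul_le_aux (ENNReal.ofReal ((σ₁:ℝ)/σ₂)) (gaussianReal 0 (σ₁ ^ 2))
      (gaussianReal 0 (σ₂ ^ 2)) (smul_gauss_le_aux σ₁ σ₂ h1 h12) n s hs
    rwa [← ENNReal.ofReal_pow (by positivity)] at this
  have hPprob : IsProbabilityMeasure P := by infer_instance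
  have hQprob : IsProbabilityMeasure Q := by infer_instance
  apply Real.iSup_le _ (by linarith)
  rintro ⟨s, hs⟩
  have hkey := key s hs
  have hkeyc := key sᶜ hs.compl
  have hreal : ∀ (μ : Measure (Fin n → ℝ)) (t : Set (Fin n → ℝ)),
      IsProbabilityMeasure μ → MeasurableSet t →
      ENNReal.ofReal r * μ t ≤ Q t → False ∨ True := fun _ _ _ _ _ => Or.inr trivial
  set p := (P s).toReal with hp
  set q := (Q s).toReal with hq
  have hp01 : 0 ≤ p ∧ p ≤ 1 := ⟨ENNReal.toReal_nonneg, by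
    rw [hp]; exact ENNReal.toReal_le_of_le_ofReal one_pos.le (by simpa using prob_le_one)⟩
  have hq01 : 0 ≤ q ∧ q ≤ 1 := ⟨ENNReal.toReal_nonneg, by
    rw [hq]; exact ENNReal.toReal_le_of_le_ofReal one_pos.le (by simpa using prob_le_one)⟩
  have htr : ∀ (t : Set (Fin n → ℝ)), ENNReal.ofReal r * P t ≤ Q t →
      r * (P t).toReal ≤ (Q t).toReal := by
    intro t ht
    have := ENNReal.toReal_mono (measure_ne_top Q t) ht
    rwa [ENNReal.toReal_mul, ENNReal.toReal_ofReal hr0] at this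
  have h3 := htr s hkey
  have h4 := htr sᶜ hkeyc
  have hPc : (P sᶜ).toReal = 1 - p := by
    rw [measure_compl hs (measure_ne_top _ _), measure_univ,
      ENNReal.toReal_sub_of_le prob_le_one ENNReal.one_ne_top, ENNReal.toReal_one]
  have hQc : (Q sᶜ).toReal = 1 - q := by
    rw [measure_compl hs (measure_ne_top _ _), measure_univ,
      ENNReal.toReal_sub_of_le prob_le_one ENNReal.one_ne_top, ENNReal.toReal_one]
  rw [hPc, hQc] at h4
  rw [abs_le]
  constructor <;> nlinarith [hp01.1, hp01.2, hq01.1, hq01.2]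
end

section
/- Let (X_i)_{i≥1} and (Y_i)_{i≥1} be sequences of i.i.d. real random variables that are almost surely nonzero, and let N, N′ be Poisson random variables with means λ and λ′ respectively, where N is independent of (X_i) and N′ is independent of (Y_i). Then for any n ≥ 1, ‖ℒ(∑_{i=1}^N X_i)^{⊗n} − ℒ(∑_{i=1}^{N′} Y_i)^{⊗n}‖_TV ≤ n (λ ∧ λ′) ‖X₁ − Y₁‖_TV + 1 − e^{−n|λ−λ′|}. -/
open MeasureTheory ProbabilityTheory
open scoped ENNReal NNReal

section TVBasic

variable {α β : Type*} [MeasurableSpace α] [MeasurableSpace β]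

lemma tvDist_le {P Q : Measure α} {c : ℝ}
    (h : ∀ s : Set α, MeasurableSet s → |(P s).toReal - (Q s).toReal| ≤ c) :
    tvDist P Q ≤ c :=
  ciSup_le fun s => h s s.2

lemma toReal_prob_le_one (P : Measure α) [IsProbabilityMeasure P] (s : Set α) :
    (P s).toReal ≤ 1 := by
  rw [← ENNReal.toReal_one]
  exact ENNReal.toReal_mono ENNReal.one_ne_top prob_le_one

lemma bddAbove_tv (P Q : Measure α) [IsProbabilityMeasure P] [IsProbabilityMeasure Q] :
    BddAbove (Set.range fun s : {s : Set α // MeasurableSet s} =>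
      |(P s.1).toReal - (Q s.1).toReal|) := by
  refine ⟨2, ?_⟩
  rintro x ⟨s, rfl⟩
  have h1 := toReal_prob_le_one P s.1
  have h2 := toReal_prob_le_one Q s.1
  have h3 : (0:ℝ) ≤ (P s.1).toReal := ENNReal.toReal_nonneg
  have h4 : (0:ℝ) ≤ (Q s.1).toReal := ENNReal.toReal_nonneg
  rw [abs_sub_le_iff]
  constructor <;> linarith

lemma abs_sub_le_tvDist (P Q : Measure α) [IsProbabilityMeasure P] [IsProbabilityMeasure Q]
    {s : Set α} (hs : MeasurableSet s) :
    |(P s).toReal - (Q s).toReal| ≤ tvDist P Q :=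
  le_ciSup (bddAbove_tv P Q) (⟨s, hs⟩ : {s : Set α // MeasurableSet s})

lemma tvDist_nonneg (P Q : Measure α) [IsProbabilityMeasure P] [IsProbabilityMeasure Q] :
    0 ≤ tvDist P Q := by
  have := abs_sub_le_tvDist P Q MeasurableSet.empty
  simpa using this

lemma tvDist_comm (P Q : Measure α) : tvDist P Q = tvDist Q P := by
  unfold tvDist
  congr 1
  ext s
  rw [abs_sub_comm]

lemma tvDist_triangle (P Q R : Measure α) [IsProbabilityMeasure P] [IsProbabilityMeasure Q]
    [IsProbabilityMeasure R] :
    tvDist P R ≤ tvDist P Q + tvDist Q R := by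
  refine tvDist_le fun s hs => ?_
  calc |(P s).toReal - (R s).toReal|
      ≤ |(P s).toReal - (Q s).toReal| + |(Q s).toReal - (R s).toReal| := abs_sub_le _ _ _
    _ ≤ tvDist P Q + tvDist Q R :=
        add_le_add (abs_sub_le_tvDist P Q hs) (abs_sub_le_tvDist Q R hs)

lemma tvDist_map_le {f : α → β} (hf : Measurable f) (P Q : Measure α)
    [IsProbabilityMeasure P] [IsProbabilityMeasure Q] :
    tvDist (P.map f) (Q.map f) ≤ tvDist P Q := by
  refine tvDist_le fun s hs => ?_
  rw [Measure.map_apply hf hs, Measure.map_apply hf hs]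
  exact abs_sub_le_tvDist P Q (hf hs)

end TVBasic

section TVProd

variable {α β : Type*} [MeasurableSpace α] [MeasurableSpace β]

lemma tvDist_prod_right (P : Measure α) (A B : Measure β)
    [IsProbabilityMeasure P] [IsProbabilityMeasure A] [IsProbabilityMeasure B] :
    tvDist (P.prod A) (P.prod B) ≤ tvDist A B := by
  refine tvDist_le fun s hs => ?_
  rw [Measure.prod_apply hs, Measure.prod_apply hs]
  have hma : Measurable fun x => A (Prod.mk x ⁻¹' s) := measurable_measure_prodMk_left hs
  have hmb : Measurable fun x => B (Prod.mk x ⁻¹' s) := measurable_measure_prodMk_left hs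
  rw [← integral_toReal hma.aemeasurable (ae_of_all _ fun x => measure_lt_top A _),
    ← integral_toReal hmb.aemeasurable (ae_of_all _ fun x => measure_lt_top B _)]
  have hIa : Integrable (fun x => (A (Prod.mk x ⁻¹' s)).toReal) P := by
    refine (integrable_const (1:ℝ)).mono' hma.ennreal_toReal.aestronglyMeasurable ?_
    refine ae_of_all _ fun x => ?_
    rw [Real.norm_eq_abs, abs_of_nonneg ENNReal.toReal_nonneg]
    exact toReal_prob_le_one A _
  have hIb : Integrable (fun x => (B (Prod.mk x ⁻¹' s)).toReal) P := by
    refine (integrable_const (1:ℝ)).mono' hmb.ennreal_toReal.aestronglyMeasurable ?_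
    refine ae_of_all _ fun x => ?_
    rw [Real.norm_eq_abs, abs_of_nonneg ENNReal.toReal_nonneg]
    exact toReal_prob_le_one B _
  rw [← integral_sub hIa hIb]
  calc |∫ x, ((A (Prod.mk x ⁻¹' s)).toReal - (B (Prod.mk x ⁻¹' s)).toReal) ∂P|
      ≤ ∫ x, |(A (Prod.mk x ⁻¹' s)).toReal - (B (Prod.mk x ⁻¹' s)).toReal| ∂P :=
        by simpa [Real.norm_eq_abs] using
          norm_integral_le_integral_norm (μ := P)
            (fun x => (A (Prod.mk x ⁻¹' s)).toReal - (B (Prod.mk x ⁻¹' s)).toReal)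
    _ ≤ ∫ _x, tvDist A B ∂P := by
        refine integral_mono (hIa.sub hIb).abs (integrable_const _) fun x => ?_
        exact abs_sub_le_tvDist A B (measurable_prodMk_left hs)
    _ = tvDist A B := by simp

lemma tvDist_prod (P Q : Measure α) (A B : Measure β)
    [IsProbabilityMeasure P] [IsProbabilityMeasure Q]
    [IsProbabilityMeasure A] [IsProbabilityMeasure B] :
    tvDist (P.prod A) (Q.prod B) ≤ tvDist P Q + tvDist A B := by
  have h1 : tvDist (P.prod A) (P.prod B) ≤ tvDist A B := tvDist_prod_right P A B
  have h2 : tvDist (P.prod B) (Q.prod B) ≤ tvDist P Q := by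
    have e1 : (B.prod P).map Prod.swap = P.prod B := Measure.prod_swap
    have e2 : (B.prod Q).map Prod.swap = Q.prod B := Measure.prod_swap
    rw [← e1, ← e2]
    exact le_trans (tvDist_map_le measurable_swap _ _) (tvDist_prod_right B P Q)
  calc tvDist (P.prod A) (Q.prod B)
      ≤ tvDist (P.prod A) (P.prod B) + tvDist (P.prod B) (Q.prod B) := tvDist_triangle _ _ _
    _ ≤ tvDist P Q + tvDist A B := by linarith

end TVProd

section TVPi

variable {α : Type*} [MeasurableSpace α]

lemma pi_map_succ {n : ℕ} (F : Fin (n + 1) → Measure α) [∀ i, IsProbabilityMeasure (F i)] :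
    Measure.pi F = ((F 0).prod (Measure.pi fun j : Fin n => F ((0 : Fin (n+1)).succAbove j))).map
      (MeasurableEquiv.piFinSuccAbove (fun _ => α) 0).symm :=
  (((measurePreserving_piFinSuccAbove F 0).symm
    (MeasurableEquiv.piFinSuccAbove (fun _ => α) 0)).map_eq).symm

lemma tvDist_pi_le : ∀ {n : ℕ} (F G : Fin n → Measure α),
    (∀ i, IsProbabilityMeasure (F i)) → (∀ i, IsProbabilityMeasure (G i)) →
    tvDist (Measure.pi F) (Measure.pi G) ≤ ∑ i, tvDist (F i) (G i) := by
  intro n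
  induction n with
  | zero =>
    intro F G _ _
    have : F = G := funext fun i => i.elim0
    subst this
    simp only [Finset.univ_eq_empty, Finset.sum_empty]
    exact tvDist_le fun s hs => by simp
  | succ n ih =>
    intro F G hF hG
    haveI := hF; haveI := hG
    haveI : ∀ j : Fin n, IsProbabilityMeasure (F ((0 : Fin (n+1)).succAbove j)) :=
      fun j => hF _
    haveI : ∀ j : Fin n, IsProbabilityMeasure (G ((0 : Fin (n+1)).succAbove j)) :=
      fun j => hG _
    rw [pi_map_succ F, pi_map_succ G, Fin.sum_univ_succ]
    refine le_trans (tvDist_map_le (MeasurableEquiv.measurable _) _ _) ?_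
    refine le_trans (tvDist_prod _ _ _ _) ?_
    have := ih (fun j => F ((0 : Fin (n+1)).succAbove j))
      (fun j => G ((0 : Fin (n+1)).succAbove j)) (fun j => hF _) (fun j => hG _)
    refine add_le_add le_rfl (le_trans this (le_of_eq ?_))
    refine Finset.sum_congr rfl fun j _ => ?_
    simp only [Fin.zero_succAbove]

lemma smul_prod_measure (c : ℝ≥0∞) (μ : Measure α) {β : Type*} [MeasurableSpace β]
    (ν : Measure β) [SFinite ν] :
    (c • μ).prod ν = c • (μ.prod ν) := by
  ext s hs
  rw [Measure.smul_apply, Measure.prod_apply hs, Measure.prod_apply hs,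
    lintegral_smul_measure]

lemma prod_smul_measure (c : ℝ≥0∞) (μ : Measure α) {β : Type*} [MeasurableSpace β]
    (ν : Measure β) [SFinite ν] :
    μ.prod (c • ν) = c • (μ.prod ν) := by
  ext s hs
  rw [Measure.smul_apply, Measure.prod_apply hs, Measure.prod_apply hs, smul_eq_mul,
    ← lintegral_const_mul _ (measurable_measure_prodMk_left hs)]
  simp [Measure.smul_apply]

lemma prod_mono {μ₁ μ₂ : Measure α} {β : Type*} [MeasurableSpace β] {ν₁ ν₂ : Measure β}
    [SFinite ν₁] [SFinite ν₂]
    (h1 : μ₁ ≤ μ₂) (h2 : ν₁ ≤ ν₂) : μ₁.prod ν₁ ≤ μ₂.prod ν₂ := by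
  refine Measure.le_iff.2 fun s hs => ?_
  rw [Measure.prod_apply hs, Measure.prod_apply hs]
  refine le_trans (lintegral_mono fun x => Measure.le_iff'.1 h2 _) ?_
  exact lintegral_mono' h1 le_rfl

lemma smul_pi_le_pi {P Q : Measure α} [IsProbabilityMeasure P] [IsProbabilityMeasure Q]
    {c : ℝ≥0∞} (h : c • P ≤ Q) :
    ∀ n : ℕ, c ^ n • Measure.pi (fun _ : Fin n => P) ≤ Measure.pi (fun _ : Fin n => Q) := by
  intro n
  induction n with
  | zero =>
    simp only [pow_zero, one_smul]
    have : (fun _ : Fin 0 => P) = fun _ : Fin 0 => Q := funext fun i => i.elim0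
    rw [this]
  | succ n ih =>
    rw [pi_map_succ (fun _ : Fin (n+1) => P), pi_map_succ (fun _ : Fin (n+1) => Q)]
    rw [← Measure.map_smul]
    refine Measure.map_mono ?_ (MeasurableEquiv.measurable _)
    have : (c ^ (n+1)) • (P.prod (Measure.pi fun _ : Fin n => P))
        = (c • P).prod ((c ^ n) • Measure.pi (fun _ : Fin n => P)) := by
      rw [smul_prod_measure, prod_smul_measure, smul_smul, pow_succ, mul_comm]
    rw [this]
    exact prod_mono h ih

end TVPi

section TVSmul

variable {α : Type*} [MeasurableSpace α]

lemma tvDist_le_one_sub {P Q : Measure α} [IsProbabilityMeasure P] [IsProbabilityMeasure Q]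
    {c : ℝ} (hc0 : 0 ≤ c) (h : ENNReal.ofReal c • P ≤ Q) :
    tvDist P Q ≤ 1 - c := by
  have key : ∀ t : Set α, (P t).toReal - (Q t).toReal ≤ 1 - c := by
    intro t
    have h1 : ENNReal.ofReal c * P t ≤ Q t := Measure.le_iff'.1 h t
    have h2 : c * (P t).toReal ≤ (Q t).toReal := by
      have := ENNReal.toReal_mono (measure_ne_top Q t) h1
      rwa [ENNReal.toReal_mul, ENNReal.toReal_ofReal hc0] at this
    have hc1 : c ≤ 1 := by
      have h1u : ENNReal.ofReal c * P Set.univ ≤ Q Set.univ := Measure.le_iff'.1 h Set.univ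
      have := ENNReal.toReal_mono (measure_ne_top Q Set.univ) h1u
      rw [ENNReal.toReal_mul, ENNReal.toReal_ofReal hc0] at this
      simpa using this
    have hp1 : (P t).toReal ≤ 1 := toReal_prob_le_one P t
    have hq0 : (0:ℝ) ≤ (Q t).toReal := ENNReal.toReal_nonneg
    have hp0 : (0:ℝ) ≤ (P t).toReal := ENNReal.toReal_nonneg
    nlinarith
  refine tvDist_le fun s hs => ?_
  rw [abs_sub_le_iff]
  refine ⟨key s, ?_⟩
  have hPc : (P sᶜ).toReal = 1 - (P s).toReal := by
    rw [measure_compl hs (measure_ne_top _ _), measure_univ,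
      ENNReal.toReal_sub_of_le prob_le_one ENNReal.one_ne_top, ENNReal.toReal_one]
  have hQc : (Q sᶜ).toReal = 1 - (Q s).toReal := by
    rw [measure_compl hs (measure_ne_top _ _), measure_univ,
      ENNReal.toReal_sub_of_le prob_le_one ENNReal.one_ne_top, ENNReal.toReal_one]
  have := key sᶜ
  rw [hPc, hQc] at this
  linarith

lemma tvDist_sum_le (w : ℕ → ℝ≥0∞) (P Q : ℕ → Measure α)
    [hP : ∀ k, IsProbabilityMeasure (P k)] [hQ : ∀ k, IsProbabilityMeasure (Q k)]
    (hw : ∀ k, w k ≠ ⊤) (hws : ∑' k, w k ≠ ⊤)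
    (b : ℕ → ℝ) (hb : ∀ k, tvDist (P k) (Q k) ≤ b k)
    (hbs : Summable fun k => (w k).toReal * b k) :
    tvDist (Measure.sum fun k => w k • P k) (Measure.sum fun k => w k • Q k)
      ≤ ∑' k, (w k).toReal * b k := by
  refine tvDist_le fun s hs => ?_
  rw [Measure.sum_apply _ hs, Measure.sum_apply _ hs]
  have hPfin : ∀ k, (w k • P k) s ≠ ⊤ := fun k => by
    rw [Measure.smul_apply, smul_eq_mul]
    exact ENNReal.mul_ne_top (hw k) (measure_ne_top _ _)
  have hQfin : ∀ k, (w k • Q k) s ≠ ⊤ := fun k => by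
    rw [Measure.smul_apply, smul_eq_mul]
    exact ENNReal.mul_ne_top (hw k) (measure_ne_top _ _)
  rw [ENNReal.tsum_toReal_eq hPfin, ENNReal.tsum_toReal_eq hQfin]
  have hwsum : Summable fun k => (w k).toReal := ENNReal.summable_toReal hws
  have ha : Summable fun k => ((w k • P k) s).toReal := by
    refine Summable.of_nonneg_of_le (fun k => ENNReal.toReal_nonneg) (fun k => ?_) hwsum
    rw [Measure.smul_apply, smul_eq_mul, ENNReal.toReal_mul]
    calc (w k).toReal * (P k s).toReal ≤ (w k).toReal * 1 :=
          mul_le_mul_of_nonneg_left (toReal_prob_le_one _ _) ENNReal.toReal_nonneg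
      _ = (w k).toReal := mul_one _
  have hbq : Summable fun k => ((w k • Q k) s).toReal := by
    refine Summable.of_nonneg_of_le (fun k => ENNReal.toReal_nonneg) (fun k => ?_) hwsum
    rw [Measure.smul_apply, smul_eq_mul, ENNReal.toReal_mul]
    calc (w k).toReal * (Q k s).toReal ≤ (w k).toReal * 1 :=
          mul_le_mul_of_nonneg_left (toReal_prob_le_one _ _) ENNReal.toReal_nonneg
      _ = (w k).toReal := mul_one _
  have hdiff : ∀ k, |((w k • P k) s).toReal - ((w k • Q k) s).toReal|
      ≤ (w k).toReal * b k := by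
    intro k
    rw [Measure.smul_apply, Measure.smul_apply, smul_eq_mul, smul_eq_mul,
      ENNReal.toReal_mul, ENNReal.toReal_mul, ← mul_sub, abs_mul,
      abs_of_nonneg (ENNReal.toReal_nonneg : (0:ℝ) ≤ (w k).toReal)]
    exact mul_le_mul_of_nonneg_left
      (le_trans (abs_sub_le_tvDist (P k) (Q k) hs) (hb k)) ENNReal.toReal_nonneg
  have hsub : Summable fun k =>
      |((w k • P k) s).toReal - ((w k • Q k) s).toReal| :=
    Summable.of_nonneg_of_le (fun k => abs_nonneg _) hdiff hbs
  calc |(∑' k, ((w k • P k) s).toReal) - ∑' k, ((w k • Q k) s).toReal|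
      = |∑' k, (((w k • P k) s).toReal - ((w k • Q k) s).toReal)| := by
        rw [Summable.tsum_sub ha hbq]
    _ ≤ ∑' k, |((w k • P k) s).toReal - ((w k • Q k) s).toReal| := by
        have := norm_tsum_le_tsum_norm (by simpa using hsub :
          Summable fun k => ‖((w k • P k) s).toReal - ((w k • Q k) s).toReal‖)
        simpa using this
    _ ≤ ∑' k, (w k).toReal * b k := Summable.tsum_le_tsum hdiff hsub hbs

end TVSmul

section CompoundPoisson

open Real

noncomputable def pois (l : ℝ) (k : ℕ) : ℝ≥0∞ :=
  ENNReal.ofReal (Real.exp (-l) * l ^ k / k.factorial)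

lemma pois_nonneg_real {l : ℝ} (hl : 0 ≤ l) (k : ℕ) :
    0 ≤ Real.exp (-l) * l ^ k / k.factorial := by positivity

lemma pois_toReal {l : ℝ} (hl : 0 ≤ l) (k : ℕ) :
    (pois l k).toReal = Real.exp (-l) * l ^ k / k.factorial :=
  ENNReal.toReal_ofReal (pois_nonneg_real hl k)

lemma pois_hasSum {l : ℝ} (hl : 0 ≤ l) :
    HasSum (fun k => Real.exp (-l) * l ^ k / k.factorial) 1 := by
  have := poissonPMFRealSum l.toNNReal
  simpa [poissonPMFReal, Real.coe_toNNReal l hl] using this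

lemma pois_tsum_one {l : ℝ} (hl : 0 ≤ l) : ∑' k, pois l k = 1 := by
  unfold pois
  rw [← ENNReal.ofReal_tsum_of_nonneg (pois_nonneg_real hl) (pois_hasSum hl).summable,
    (pois_hasSum hl).tsum_eq, ENNReal.ofReal_one]

lemma pois_mean {l : ℝ} (hl : 0 ≤ l) :
    HasSum (fun k => (pois l k).toReal * k) l := by
  have h0 : HasSum (fun k => l * (Real.exp (-l) * l ^ k / k.factorial)) l := by
    simpa using (pois_hasSum hl).mul_left l
  have h1eq : (fun k : ℕ => (pois l (k + 1)).toReal * ((k + 1 : ℕ) : ℝ))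
      = fun k => l * (Real.exp (-l) * l ^ k / k.factorial) := by
    funext k
    rw [pois_toReal hl]
    have hkf : (k.factorial : ℝ) ≠ 0 := Nat.cast_ne_zero.2 k.factorial_ne_zero
    have hfac : (((k + 1).factorial : ℕ) : ℝ) = ((k : ℝ) + 1) * k.factorial := by
      rw [Nat.factorial_succ]; push_cast; ring
    rw [hfac]
    push_cast
    rw [pow_succ]
    field_simp
  refine (hasSum_nat_add_iff' (f := fun k => (pois l k).toReal * k) 1).1 ?_
  rw [Finset.sum_range_one]
  simp only [Nat.cast_zero, mul_zero, sub_zero]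
  rw [show (fun n : ℕ => (pois l (n + 1)).toReal * ((n + 1 : ℕ) : ℝ))
    = fun k => l * (Real.exp (-l) * l ^ k / k.factorial) from h1eq]
  exact h0

noncomputable def sumLaw (F : Measure ℝ) (k : ℕ) : Measure ℝ :=
  (Measure.pi fun _ : Fin k => F).map (fun v => ∑ i, v i)

lemma measurable_finSum (k : ℕ) : Measurable fun v : Fin k → ℝ => ∑ i, v i :=
  Finset.measurable_sum _ fun i _ => measurable_pi_apply i

instance sumLaw_prob (F : Measure ℝ) [IsProbabilityMeasure F] (k : ℕ) :
    IsProbabilityMeasure (sumLaw F k) :=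
  Measure.isProbabilityMeasure_map (measurable_finSum k).aemeasurable

noncomputable def cp (l : ℝ) (F : Measure ℝ) : Measure ℝ :=
  Measure.sum fun k => pois l k • sumLaw F k

lemma cp_prob {l : ℝ} (hl : 0 ≤ l) (F : Measure ℝ) [IsProbabilityMeasure F] :
    IsProbabilityMeasure (cp l F) := by
  constructor
  rw [cp, Measure.sum_apply _ MeasurableSet.univ]
  simp only [Measure.smul_apply, smul_eq_mul, measure_univ, mul_one]
  exact pois_tsum_one hl

lemma tvDist_sumLaw_le (F G : Measure ℝ) [IsProbabilityMeasure F] [IsProbabilityMeasure G]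
    (k : ℕ) : tvDist (sumLaw F k) (sumLaw G k) ≤ k * tvDist F G := by
  refine le_trans (tvDist_map_le (measurable_finSum k) _ _) ?_
  refine le_trans (tvDist_pi_le _ _ (fun _ => inferInstance) (fun _ => inferInstance)) ?_
  simp [Finset.sum_const, Finset.card_univ, nsmul_eq_mul]

lemma tvDist_cp_le {l : ℝ} (hl : 0 ≤ l) (F G : Measure ℝ)
    [IsProbabilityMeasure F] [IsProbabilityMeasure G] :
    tvDist (cp l F) (cp l G) ≤ l * tvDist F G := by
  have hmean := pois_mean hl
  have htv0 : 0 ≤ tvDist F G := tvDist_nonneg F G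
  have hbs : Summable fun k => (pois l k).toReal * ((k:ℝ) * tvDist F G) := by
    have := (hmean.mul_right (tvDist F G)).summable
    refine this.congr fun k => ?_
    ring
  have hsum : ∑' k, (pois l k).toReal * ((k:ℝ) * tvDist F G) = l * tvDist F G := by
    rw [show (fun k => (pois l k).toReal * ((k:ℝ) * tvDist F G))
        = fun k => ((pois l k).toReal * k) * tvDist F G from by funext k; ring]
    rw [tsum_mul_right, hmean.tsum_eq]
  rw [cp, cp, ← hsum]
  refine tvDist_sum_le (pois l) (sumLaw F) (sumLaw G)
    (fun k => ENNReal.ofReal_ne_top) ?_ (fun k => (k:ℝ) * tvDist F G)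
    (fun k => tvDist_sumLaw_le F G k) hbs
  rw [pois_tsum_one hl]
  exact ENNReal.one_ne_top

lemma cp_smul_le {l l' : ℝ} (hl : 0 ≤ l) (hll' : l ≤ l') (G : Measure ℝ) :
    ENNReal.ofReal (Real.exp (-(l' - l))) • cp l G ≤ cp l' G := by
  refine Measure.le_iff.2 fun s hs => ?_
  rw [Measure.smul_apply, cp, cp, Measure.sum_apply _ hs, Measure.sum_apply _ hs,
    smul_eq_mul, ← ENNReal.tsum_mul_left]
  refine ENNReal.tsum_le_tsum fun k => ?_
  simp only [Measure.smul_apply, smul_eq_mul, ← mul_assoc]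
  refine mul_le_mul_left ?_ _
  unfold pois
  rw [← ENNReal.ofReal_mul (Real.exp_nonneg _)]
  refine ENNReal.ofReal_le_ofReal ?_
  rw [← mul_div_assoc, ← mul_assoc, ← Real.exp_add]
  have : -(l' - l) + -l = -l' := by ring
  rw [this, mul_div_assoc, mul_div_assoc]
  refine mul_le_mul_of_nonneg_left ?_ (Real.exp_nonneg _)
  refine div_le_div_of_nonneg_right ?_ (by positivity) |>.trans le_rfl
  · exact pow_le_pow_left₀ hl hll' k

lemma tvDist_pi_cp_le {l l' : ℝ} (hl : 0 ≤ l) (hll' : l ≤ l') (G : Measure ℝ)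
    [IsProbabilityMeasure G] (n : ℕ) :
    tvDist (Measure.pi fun _ : Fin n => cp l G) (Measure.pi fun _ : Fin n => cp l' G)
      ≤ 1 - Real.exp (-(n * (l' - l))) := by
  haveI := cp_prob hl G
  haveI := cp_prob (le_trans hl hll') G
  refine tvDist_le_one_sub (Real.exp_nonneg _) ?_
  have h := smul_pi_le_pi (cp_smul_le hl hll' G) n
  have : ENNReal.ofReal (Real.exp (-(n * (l' - l))))
      = ENNReal.ofReal (Real.exp (-(l' - l))) ^ n := by
    rw [← ENNReal.ofReal_pow (Real.exp_nonneg _), ← Real.exp_nat_mul]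
    ring_nf
  rwa [this]

lemma key_bound (F G : Measure ℝ) [IsProbabilityMeasure F] [IsProbabilityMeasure G]
    {l l' : ℝ} (hl : 0 ≤ l) (hll' : l ≤ l') (n : ℕ) :
    tvDist (Measure.pi fun _ : Fin n => cp l F) (Measure.pi fun _ : Fin n => cp l' G)
      ≤ n * l * tvDist F G + (1 - Real.exp (-(n * (l' - l)))) := by
  haveI := cp_prob hl F
  haveI := cp_prob hl G
  haveI := cp_prob (le_trans hl hll') G
  have h1 : tvDist (Measure.pi fun _ : Fin n => cp l F) (Measure.pi fun _ : Fin n => cp l G)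
      ≤ n * l * tvDist F G := by
    refine le_trans (tvDist_pi_le _ _ (fun _ => inferInstance) (fun _ => inferInstance)) ?_
    have := tvDist_cp_le hl F G
    calc ∑ _i : Fin n, tvDist (cp l F) (cp l G)
        = n * tvDist (cp l F) (cp l G) := by
          simp [Finset.sum_const, Finset.card_univ, nsmul_eq_mul]
      _ ≤ n * (l * tvDist F G) := by
          refine mul_le_mul_of_nonneg_left this (by positivity)
      _ = n * l * tvDist F G := by ring
  have h2 := tvDist_pi_cp_le hl hll' G (n := n)
  calc tvDist (Measure.pi fun _ : Fin n => cp l F) (Measure.pi fun _ : Fin n => cp l' G)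
      ≤ tvDist (Measure.pi fun _ : Fin n => cp l F) (Measure.pi fun _ : Fin n => cp l G)
        + tvDist (Measure.pi fun _ : Fin n => cp l G)
          (Measure.pi fun _ : Fin n => cp l' G) := tvDist_triangle _ _ _
    _ ≤ n * l * tvDist F G + (1 - Real.exp (-(n * (l' - l)))) := add_le_add h1 h2

end CompoundPoisson

section Identify

variable {Ω : Type*} [MeasurableSpace Ω]

lemma joint_law (μ : Measure Ω) [IsProbabilityMeasure μ] (X : ℕ → Ω → ℝ)
    (hXm : ∀ i, Measurable (X i))
    (hXiid : iIndepFun X μ)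
    (hXid : ∀ i, IdentDistrib (X i) (X 0) μ μ) (k : ℕ) :
    μ.map (fun ω => fun i : Fin k => X (i : ℕ) ω)
      = Measure.pi (fun _ : Fin k => μ.map (X 0)) := by
  haveI : IsProbabilityMeasure (μ.map (X 0)) :=
    Measure.isProbabilityMeasure_map (hXm 0).aemeasurable
  symm
  refine Measure.pi_eq fun s hs => ?_
  classical
  have hvec : Measurable (fun ω => fun i : Fin k => X (i : ℕ) ω) :=
    measurable_pi_lambda _ fun i => hXm i
  rw [Measure.map_apply hvec (MeasurableSet.univ_pi hs)]
  set sets : ℕ → Set ℝ := fun i => if h : i < k then s ⟨i, h⟩ else Set.univ with hsets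
  have hpre : (fun ω => fun i : Fin k => X (i : ℕ) ω) ⁻¹' (Set.pi Set.univ s)
      = ⋂ i ∈ Finset.range k, X i ⁻¹' sets i := by
    ext ω
    simp only [Set.mem_preimage, Set.mem_pi, Set.mem_univ, forall_true_left,
      Set.mem_iInter, Finset.mem_range, hsets]
    constructor
    · intro h i hi
      rw [dif_pos hi]
      exact h ⟨i, hi⟩
    · intro h i
      have := h i i.isLt
      rwa [dif_pos i.isLt] at this
  rw [hpre, hXiid.measure_inter_preimage_eq_mul (Finset.range k)
    (fun i hi => by
      rw [hsets]
      simp only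
      rw [dif_pos (Finset.mem_range.1 hi)]
      exact hs _)]
  rw [← Fin.prod_univ_eq_prod_range (fun i => μ (X i ⁻¹' sets i)) k]
  refine Finset.prod_congr rfl fun i _ => ?_
  have hseti : sets (i : ℕ) = s i := by
    rw [hsets]
    simp only
    rw [dif_pos i.isLt]
  rw [hseti, ← (hXid i).map_eq, Measure.map_apply (hXm i) (hs i)]

lemma compound_law (μ : Measure Ω) [IsProbabilityMeasure μ] (X : ℕ → Ω → ℝ) (N : Ω → ℕ)
    (l : ℝ)
    (hXm : ∀ i, Measurable (X i)) (hNm : Measurable N)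
    (hXiid : iIndepFun X μ)
    (hXid : ∀ i, IdentDistrib (X i) (X 0) μ μ)
    (hN : ∀ k : ℕ, μ {ω | N ω = k}
      = ENNReal.ofReal (Real.exp (-l) * l ^ k / k.factorial))
    (hNX : IndepFun N (fun ω => fun i => X i ω) μ) :
    μ.map (fun ω => ∑ i ∈ Finset.range (N ω), X i ω) = cp l (μ.map (X 0)) := by
  haveI : IsProbabilityMeasure (μ.map (X 0)) :=
    Measure.isProbabilityMeasure_map (hXm 0).aemeasurable
  have hseq : Measurable (fun ω => fun i : ℕ => X i ω) :=
    measurable_pi_lambda _ fun i => hXm i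
  have hCS : Measurable (fun ω => ∑ i ∈ Finset.range (N ω), X i ω) := by
    have hf : Measurable (fun p : (ℕ → ℝ) × ℕ => ∑ i ∈ Finset.range p.2, p.1 i) :=
      measurable_from_prod_countable_left fun k => by
        exact Finset.measurable_sum (Finset.range k) fun i _ => measurable_pi_apply i
    exact hf.comp (hseq.prodMk hNm)
  have hSk : ∀ k : ℕ, Measurable (fun ω => ∑ i ∈ Finset.range k, X i ω) := fun k =>
    Finset.measurable_sum _ fun i _ => hXm i
  ext s hs
  rw [Measure.map_apply hCS hs, cp, Measure.sum_apply _ hs]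
  have hun : (fun ω => ∑ i ∈ Finset.range (N ω), X i ω) ⁻¹' s
      = ⋃ k : ℕ, (N ⁻¹' {k} ∩ (fun ω => ∑ i ∈ Finset.range k, X i ω) ⁻¹' s) := by
    ext ω
    simp only [Set.mem_preimage, Set.mem_iUnion, Set.mem_inter_iff, Set.mem_singleton_iff]
    constructor
    · intro h
      exact ⟨N ω, rfl, h⟩
    · rintro ⟨k, rfl, h⟩
      exact h
  rw [hun, measure_iUnion ?_ ?_]
  · refine tsum_congr fun k => ?_
    have hindep : IndepFun N (fun ω => ∑ i ∈ Finset.range k, X i ω) μ := by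
      have h := hNX.comp (measurable_id : Measurable (id : ℕ → ℕ))
        (Finset.measurable_sum (Finset.range k) fun i _ =>
          (measurable_pi_apply i : Measurable fun v : ℕ → ℝ => v i))
      exact h
    have := (indepFun_iff_measure_inter_preimage_eq_mul.1 hindep)
      {k} s (measurableSet_singleton k) hs
    rw [this]
    have hNk : μ (N ⁻¹' {k}) = pois l k := by
      rw [show N ⁻¹' {k} = {ω | N ω = k} from rfl]
      exact hN k
    rw [hNk]
    have hmapk : μ.map (fun ω => ∑ i ∈ Finset.range k, X i ω)
        = sumLaw (μ.map (X 0)) k := by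
      have hcomp : (fun ω => ∑ i ∈ Finset.range k, X i ω)
          = (fun v : Fin k → ℝ => ∑ i, v i) ∘ (fun ω => fun i : Fin k => X (i : ℕ) ω) := by
        funext ω
        simp only [Function.comp_apply]
        exact (Fin.sum_univ_eq_sum_range (fun i => X i ω) k).symm
      rw [hcomp, ← Measure.map_map (measurable_finSum k)
        (measurable_pi_lambda _ fun i => hXm i),
        joint_law μ X hXm hXiid hXid k, sumLaw]
    rw [← Measure.map_apply (hSk k) hs, hmapk, Measure.smul_apply, smul_eq_mul]
  · intro k k' hkk'
    simp only [Function.onFun, Set.disjoint_left]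
    rintro ω ⟨h1, _⟩ ⟨h2, _⟩
    exact hkk' (h1.symm.trans h2)
  · intro k
    exact (hNm (measurableSet_singleton k)).inter (hSk k hs)

end Identify

theorem stmt8 {Ω : Type*} [MeasurableSpace Ω] (μ : Measure Ω) [IsProbabilityMeasure μ]
    (X Y : ℕ → Ω → ℝ) (N N' : Ω → ℕ)
    (lamX lamY : ℝ) (hlX : 0 ≤ lamX) (hlY : 0 ≤ lamY)
    (hXm : ∀ i, Measurable (X i)) (hYm : ∀ i, Measurable (Y i))
    (hNm : Measurable N) (hN'm : Measurable N')
    -- the `X_i` are i.i.d., a.s. nonzero; same for the `Y_i`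
    (hXiid : iIndepFun X μ)
    (hXid : ∀ i, IdentDistrib (X i) (X 0) μ μ)
    (hYiid : iIndepFun Y μ)
    (hYid : ∀ i, IdentDistrib (Y i) (Y 0) μ μ)
    (hXne : ∀ i, ∀ᵐ ω ∂μ, X i ω ≠ 0)
    (hYne : ∀ i, ∀ᵐ ω ∂μ, Y i ω ≠ 0)
    -- `N, N'` are Poisson with means `lamX, lamY`
    (hN : ∀ k : ℕ, μ {ω | N ω = k}
      = ENNReal.ofReal (Real.exp (-lamX) * lamX ^ k / k.factorial))
    (hN' : ∀ k : ℕ, μ {ω | N' ω = k}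
      = ENNReal.ofReal (Real.exp (-lamY) * lamY ^ k / k.factorial))
    -- `N` is independent of the sequence `(X_i)`, `N'` of `(Y_i)`
    (hNX : IndepFun N (fun ω => fun i => X i ω) μ)
    (hN'Y : IndepFun N' (fun ω => fun i => Y i ω) μ)
    (n : ℕ) (hn : 1 ≤ n) :
    tvDist
        (Measure.pi (fun _ : Fin n =>
          μ.map (fun ω => ∑ i ∈ Finset.range (N ω), X i ω)))
        (Measure.pi (fun _ : Fin n =>
          μ.map (fun ω => ∑ i ∈ Finset.range (N' ω), Y i ω)))
      ≤ n * min lamX lamY * tvDist (μ.map (X 0)) (μ.map (Y 0))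
        + (1 - Real.exp (-(n * |lamX - lamY|))) := by
  haveI : IsProbabilityMeasure (μ.map (X 0)) :=
    Measure.isProbabilityMeasure_map (hXm 0).aemeasurable
  haveI : IsProbabilityMeasure (μ.map (Y 0)) :=
    Measure.isProbabilityMeasure_map (hYm 0).aemeasurable
  rw [compound_law μ X N lamX hXm hNm hXiid hXid hN hNX,
    compound_law μ Y N' lamY hYm hN'm hYiid hYid hN' hN'Y]
  rcases le_total lamX lamY with h | h
  · have := key_bound (μ.map (X 0)) (μ.map (Y 0)) hlX h n
    rw [min_eq_left h, abs_sub_comm, abs_of_nonneg (sub_nonneg.2 h)]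
    exact this
  · have hkb := key_bound (μ.map (Y 0)) (μ.map (X 0)) hlY h n
    rw [min_eq_right h, abs_of_nonneg (sub_nonneg.2 h)]
    rw [tvDist_comm (Measure.pi fun _ : Fin n => cp lamX (μ.map (X 0))),
      tvDist_comm (μ.map (X 0))]
    exact hkb
end
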